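/- arXiv:2505.05342 — 3 statements merged into one kernel-verified Lean document; each statement's English description precedes it below -/
import Mathlib

section
/- Suppose 𝒱 satisfies the single-well hypotheses, and fix δ > 0. Define J(x;λ) := ∫_{x₊(λ)}^x √(𝒱(x̄;λ) − λ) dx̄ for x > x₊(λ). Then there exist constants C > 0 and λ₀ > 0 such that for all λ ∈ (0, λ₀] and all x ≥ δ, |J(x;λ) − ∫₀^x √𝒱(x̄;λ) dx̄| ≤ C·λ·log(1/λ)·∫₀^x √𝒱(x̄;λ) dx̄. -/
open MeasureTheory Set

noncomputable def pdermix (V : ℝ → ℝ → ℝ) (m n : ℕ) (x lam : ℝ) : ℝ :=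
  iteratedDeriv m (fun l => iteratedDeriv n (fun x' => V x' l) x) lam

structure SingleWell (V : ℝ → ℝ → ℝ) (lammax δ pp pm Vp Vm : ℝ) : Prop where
  lammax_pos : 0 < lammax
  delta_pos : 0 < δ
  pp_nonneg : 0 ≤ pp
  pm_nonneg : 0 ≤ pm
  Vp_pos : 0 < Vp
  Vm_pos : 0 < Vm
  smooth : ∀ lam ∈ Icc (0:ℝ) lammax, ContDiff ℝ 5 (fun x => V x lam)
  V_zero : ∀ lam ∈ Icc (0:ℝ) lammax, V 0 lam = 0
  dV_zero : ∀ lam ∈ Icc (0:ℝ) lammax, deriv (fun x => V x lam) 0 = 0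
  d2V_pos : ∀ lam ∈ Icc (0:ℝ) lammax, 0 < iteratedDeriv 2 (fun x => V x lam) 0
  dV_pos : ∀ lam ∈ Icc (0:ℝ) lammax, ∀ x : ℝ, 0 < x → 0 < deriv (fun x' => V x' lam) x
  dV_neg : ∀ lam ∈ Icc (0:ℝ) lammax, ∀ x : ℝ, x < 0 → deriv (fun x' => V x' lam) x < 0
  asympP : ∀ η > (0:ℝ), ∃ X > (0:ℝ), ∀ lam ∈ Icc (0:ℝ) lammax, ∀ x ≥ X,
      |V x lam - Vp * |x| ^ pp| ≤ η * (Vp * |x| ^ pp)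
  asympM : ∀ η > (0:ℝ), ∃ X > (0:ℝ), ∀ lam ∈ Icc (0:ℝ) lammax, ∀ x ≤ -X,
      |V x lam - Vm * |x| ^ pm| ≤ η * (Vm * |x| ^ pm)
  derivP : ∃ C > (0:ℝ), ∃ X > (0:ℝ), ∀ lam ∈ Icc (0:ℝ) lammax, ∀ x ≥ X,
      |deriv (fun x' => V x' lam) x| ≤ C * |x| ^ (pp - 1) ∧
      |iteratedDeriv 2 (fun x' => V x' lam) x| ≤ C * |x| ^ (pp - 2)
  derivM : ∃ C > (0:ℝ), ∃ X > (0:ℝ), ∀ lam ∈ Icc (0:ℝ) lammax, ∀ x ≤ -X,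
      |deriv (fun x' => V x' lam) x| ≤ C * |x| ^ (pm - 1) ∧
      |iteratedDeriv 2 (fun x' => V x' lam) x| ≤ C * |x| ^ (pm - 2)
  mixed_cont : ∀ m ≤ 2, ∀ n ≤ 5, ContinuousOn
      (fun p : ℝ × ℝ => pdermix V m n p.1 p.2)
      (Ioo (-δ) δ ×ˢ Icc (0:ℝ) lammax)

/-- The defining properties of the Langer transformation for potential `W := 𝒱(·;λ) - λ`
(so that the right-hand side of the ODE is `W x`), turning points `xm < xp`, parameter `b < 0`. -/
def IsLanger (W : ℝ → ℝ) (xm xp b : ℝ) (g : ℝ → ℝ) : Prop :=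
  Continuous g ∧ StrictMono g ∧
  g xp = 2 * Real.sqrt (-b) ∧ g xm = -(2 * Real.sqrt (-b)) ∧
  ∀ x : ℝ, x ≠ xm → x ≠ xp →
    DifferentiableAt ℝ g x ∧ 0 < deriv g x ∧
    (deriv g x) ^ 2 * ((1/4) * (g x) ^ 2 + b) = W x

noncomputable def bParam (W : ℝ → ℝ) (xm xp : ℝ) : ℝ :=
  -(1 / Real.pi) * ∫ x in xm..xp, Real.sqrt (-(W x))

lemma sqrt_sub_sqrt_le {a b : ℝ} (ha : 0 < a) (hab : a ≤ b) :
    Real.sqrt b - Real.sqrt (b - a) ≤ a / Real.sqrt b := by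
  have hb : 0 < b := lt_of_lt_of_le ha hab
  have hsb : 0 < Real.sqrt b := Real.sqrt_pos.mpr hb
  rw [le_div_iff₀ hsb]
  have h1 : Real.sqrt b * Real.sqrt b = b := Real.mul_self_sqrt hb.le
  have h2 : b - a ≤ Real.sqrt (b - a) * Real.sqrt b := by
    have h3 : Real.sqrt (b-a) * Real.sqrt (b-a) = b - a := Real.mul_self_sqrt (by linarith)
    nlinarith [Real.sqrt_le_sqrt (show b - a ≤ b by linarith), Real.sqrt_nonneg (b-a)]
  nlinarith

lemma deriv_lower {f : ℝ → ℝ} {κ r : ℝ} (hf : ContDiff ℝ 5 f)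
    (hf0 : f 0 = 0) (hdf0 : deriv f 0 = 0)
    (hκ : ∀ t ∈ Icc (0:ℝ) r, κ ≤ iteratedDeriv 2 f t) :
    ∀ x ∈ Icc (0:ℝ) r, κ/2 * x^2 ≤ f x := by
  have h5 : ContDiff ℝ ((4:ℕ)+1) f := by exact_mod_cast hf
  have hdf : ContDiff ℝ 4 (deriv f) := (contDiff_succ_iff_deriv.mp h5).2.2
  have hdiff : Differentiable ℝ f := hf.differentiable (by norm_num)
  have hddiff : Differentiable ℝ (deriv f) := hdf.differentiable (by norm_num)
  have hid2 : iteratedDeriv 2 f = deriv (deriv f) := by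
    rw [iteratedDeriv_succ, iteratedDeriv_one]
  have step1 : ∀ t ∈ Icc (0:ℝ) r, κ * t ≤ deriv f t := by
    have hmono : MonotoneOn (fun t => deriv f t - κ * t) (Icc 0 r) := by
      apply monotoneOn_of_deriv_nonneg (convex_Icc 0 r)
      · exact (hdf.continuous.sub (continuous_const.mul continuous_id)).continuousOn
      · exact (hddiff.sub ((differentiable_id.const_mul κ))).differentiableOn
      · intro t ht
        rw [interior_Icc] at ht
        have h1 : HasDerivAt (fun t => deriv f t - κ * t) (deriv (deriv f) t - κ) t :=
          (hddiff t).hasDerivAt.sub (by simpa using (hasDerivAt_id t).const_mul κ)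
        rw [h1.deriv]
        have := hκ t ⟨ht.1.le, ht.2.le⟩
        rw [hid2] at this
        linarith
    intro t ht
    have := hmono (show (0:ℝ) ∈ Icc (0:ℝ) r from ⟨le_refl 0, ht.1.trans ht.2⟩) ht ht.1
    simp [hdf0] at this
    linarith
  have hmono2 : MonotoneOn (fun t => f t - κ/2 * t^2) (Icc 0 r) := by
    apply monotoneOn_of_deriv_nonneg (convex_Icc 0 r)
    · exact (hf.continuous.sub (continuous_const.mul (continuous_pow 2))).continuousOn
    · exact (hdiff.sub ((differentiable_pow 2).const_mul (κ/2))).differentiableOn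
    · intro t ht
      rw [interior_Icc] at ht
      have h2 : HasDerivAt (fun t => κ/2 * t^2) (κ * t) t := by
        have := (hasDerivAt_pow 2 t).const_mul (κ/2)
        exact this.congr_deriv (by norm_num; ring)
      have h1 : HasDerivAt (fun t => f t - κ/2 * t^2) (deriv f t - κ * t) t :=
        (hdiff t).hasDerivAt.sub h2
      rw [h1.deriv]
      have := step1 t ⟨ht.1.le, ht.2.le⟩
      linarith
  intro x hx
  have := hmono2 (show (0:ℝ) ∈ Icc (0:ℝ) r from ⟨le_refl 0, hx.1.trans hx.2⟩) hx hx.1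
  simp [hf0] at this
  linarith

lemma upper_lin {f : ℝ → ℝ} {L r : ℝ} (hf : ContDiff ℝ 5 f) (hf0 : f 0 = 0)
    (hL : ∀ t ∈ Icc (0:ℝ) r, deriv f t ≤ L) :
    ∀ x ∈ Icc (0:ℝ) r, f x ≤ L * x := by
  have hdiff : Differentiable ℝ f := hf.differentiable (by norm_num)
  have hmono : MonotoneOn (fun t => L * t - f t) (Icc 0 r) := by
    apply monotoneOn_of_deriv_nonneg (convex_Icc 0 r)
    · exact ((continuous_const.mul continuous_id).sub hf.continuous).continuousOn
    · exact ((differentiable_id.const_mul L).sub hdiff).differentiableOn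
    · intro t ht
      rw [interior_Icc] at ht
      have h1 : HasDerivAt (fun t => L * t - f t) (L - deriv f t) t :=
        HasDerivAt.sub (by simpa using (hasDerivAt_id t).const_mul L) (hdiff t).hasDerivAt
      rw [h1.deriv]
      have := hL t ⟨ht.1.le, ht.2.le⟩
      linarith
  intro x hx
  have := hmono (show (0:ℝ) ∈ Icc (0:ℝ) r from ⟨le_refl 0, hx.1.trans hx.2⟩) hx hx.1
  simp [hf0] at this
  linarith

set_option maxHeartbeats 1000000 in
/-- **Outer asymptotics of `J(x;λ) = ∫_{x₊(λ)}^x √(𝒱−λ)`.**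
Uniformly for `x ≥ δ`, `J(x;λ) = (∫₀ˣ √𝒱)(1 + O(λ log(1/λ)))` as `λ ↓ 0`. -/
theorem J_outer_asymptotics (V : ℝ → ℝ → ℝ) (lammax δ pp pm Vp Vm : ℝ)
    (hV : SingleWell V lammax δ pp pm Vp Vm)
    (xm xp : ℝ → ℝ)
    (hx : ∀ lam : ℝ, 0 < lam → lam ≤ lammax →
      xm lam < 0 ∧ 0 < xp lam ∧ V (xm lam) lam = lam ∧ V (xp lam) lam = lam)
    (δ' : ℝ) (hδ' : 0 < δ') :
    ∃ C > (0:ℝ), ∃ lam0 > (0:ℝ), lam0 ≤ lammax ∧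
      ∀ lam : ℝ, 0 < lam → lam ≤ lam0 → ∀ x : ℝ, δ' ≤ x →
        |(∫ t in (xp lam)..x, Real.sqrt (V t lam - lam)) -
            ∫ t in (0:ℝ)..x, Real.sqrt (V t lam)| ≤
          C * lam * Real.log (1/lam) * ∫ t in (0:ℝ)..x, Real.sqrt (V t lam) := by
  have hlm : 0 < lammax := hV.lammax_pos
  have hδ0 : 0 < δ := hV.delta_pos
  set S : Set (ℝ × ℝ) := Ioo (-δ) δ ×ˢ Icc (0:ℝ) lammax with hS
  have hcontV1 : ContinuousOn (fun p : ℝ × ℝ => deriv (fun x' => V x' p.2) p.1) S := by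
    simpa [pdermix, iteratedDeriv_one] using hV.mixed_cont 0 (by norm_num) 1 (by norm_num)
  have hcontV2 : ContinuousOn (fun p : ℝ × ℝ => iteratedDeriv 2 (fun x' => V x' p.2) p.1) S := by
    simpa [pdermix] using hV.mixed_cont 0 (by norm_num) 2 (by norm_num)
  -- minimum of the second derivative at 0 over the compact parameter range
  have hzero_mem : ∀ lam ∈ Icc (0:ℝ) lammax, (((0:ℝ), lam) : ℝ × ℝ) ∈ S := by
    intro lam hlam
    have h0 : (0:ℝ) ∈ Ioo (-δ) δ := ⟨by linarith, hδ0⟩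
    exact Set.mk_mem_prod h0 hlam
  have hslice : ContinuousOn (fun lam => iteratedDeriv 2 (fun x' => V x' lam) 0)
      (Icc (0:ℝ) lammax) := by
    have hmap : ContinuousOn (fun lam : ℝ => (((0:ℝ), lam) : ℝ × ℝ)) (Icc (0:ℝ) lammax) :=
      (continuous_const.prodMk continuous_id).continuousOn
    have h2 := hcontV2.comp hmap (fun lam hlam => hzero_mem lam hlam)
    exact h2
  obtain ⟨lam₁, hlam₁, hmin⟩ := isCompact_Icc.exists_isMinOn
    ⟨0, left_mem_Icc.mpr hlm.le⟩ hslice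
  set κ0 := iteratedDeriv 2 (fun x' => V x' lam₁) 0 with hκ0def
  have hκ0 : 0 < κ0 := hV.d2V_pos lam₁ hlam₁
  -- uniform continuity to get a uniform lower bound on the 2nd derivative near 0
  set K : Set (ℝ × ℝ) := Icc (-(δ/2)) (δ/2) ×ˢ Icc (0:ℝ) lammax with hK
  have hKS : K ⊆ S := by
    apply prod_mono_left
    intro t ht
    exact ⟨by linarith [ht.1], by linarith [ht.2]⟩
  have hKc : IsCompact K := isCompact_Icc.prod isCompact_Icc
  have hUC := hKc.uniformContinuousOn_of_continuous (hcontV2.mono hKS)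
  rw [Metric.uniformContinuousOn_iff] at hUC
  obtain ⟨r0, hr0, hUC⟩ := hUC (κ0/2) (by linarith)
  set r : ℝ := min (r0/2) (δ/2) with hrdef
  have hr : 0 < r := lt_min (by linarith) (by linarith)
  have hrδ : r ≤ δ/2 := min_le_right _ _
  have hκbd : ∀ lam ∈ Icc (0:ℝ) lammax, ∀ t ∈ Icc (0:ℝ) r,
      κ0/2 ≤ iteratedDeriv 2 (fun x' => V x' lam) t := by
    intro lam hlam t ht
    have htr : t ≤ r := ht.2
    have hmem1 : ((t, lam) : ℝ × ℝ) ∈ K := ⟨⟨by linarith [ht.1], by linarith⟩, hlam⟩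
    have hmem0 : (((0:ℝ), lam) : ℝ × ℝ) ∈ K := ⟨⟨by linarith, by linarith⟩, hlam⟩
    have hdist : dist ((t, lam) : ℝ × ℝ) (((0:ℝ), lam) : ℝ × ℝ) < r0 := by
      rw [Prod.dist_eq]
      simp only [Real.dist_eq, sub_self, abs_zero, sub_zero]
      rw [abs_of_nonneg ht.1]
      have : (0:ℝ) ≤ t := ht.1
      have h1 : t < r0 := by
        have := min_le_left (r0/2) (δ/2)
        linarith
      simp [le_max_iff, max_lt_iff, h1, hr0]
    have hdd := hUC _ hmem1 _ hmem0 hdist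
    rw [Real.dist_eq] at hdd
    have hmin' : κ0 ≤ iteratedDeriv 2 (fun x' => V x' lam) 0 := isMinOn_iff.mp hmin lam hlam
    have := abs_lt.mp hdd
    linarith [this.1]
  -- quadratic lower bound V t lam ≥ κ0/4 t² on [0,r]
  have hquad : ∀ lam ∈ Icc (0:ℝ) lammax, ∀ t ∈ Icc (0:ℝ) r, κ0/4 * t^2 ≤ V t lam := by
    intro lam hlam t ht
    have h1 := deriv_lower (hV.smooth lam hlam) (hV.V_zero lam hlam) (hV.dV_zero lam hlam)
      (hκbd lam hlam) t ht
    have h2 : κ0/2/2 * t^2 = κ0/4 * t^2 := by ring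
    linarith [h1, h2.ge]
  -- linear upper bound V t lam ≤ L t on [0,r]
  set K1 : Set (ℝ × ℝ) := Icc (0:ℝ) (δ/2) ×ˢ Icc (0:ℝ) lammax with hK1
  have hK1S : K1 ⊆ S := by
    apply prod_mono_left
    intro t ht
    exact ⟨by linarith [ht.1], by linarith [ht.2]⟩
  obtain ⟨C1, hC1⟩ := (isCompact_Icc.prod isCompact_Icc).exists_bound_of_continuousOn
    (hcontV1.mono hK1S)
  set L : ℝ := max C1 r⁻¹ with hLdef
  have hL0 : 0 < L := lt_of_lt_of_le (inv_pos.mpr hr) (le_max_right _ _)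
  have hrL : 1 ≤ r * L := by
    have h1 : r * r⁻¹ = 1 := mul_inv_cancel₀ hr.ne'
    calc (1:ℝ) = r * r⁻¹ := h1.symm
      _ ≤ r * L := mul_le_mul_of_nonneg_left (le_max_right _ _) hr.le
  have hlogrL : 0 ≤ Real.log (r * L) := Real.log_nonneg hrL
  have hlin : ∀ lam ∈ Icc (0:ℝ) lammax, ∀ t ∈ Icc (0:ℝ) r, V t lam ≤ L * t := by
    intro lam hlam
    apply upper_lin (hV.smooth lam hlam) (hV.V_zero lam hlam)
    intro t ht
    have h1 : ‖deriv (fun x' => V x' lam) t‖ ≤ C1 :=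
      hC1 (t, lam) ⟨⟨ht.1, ht.2.trans hrδ⟩, hlam⟩
    have h2 := (abs_le.mp (by simpa [Real.norm_eq_abs] using h1)).2
    exact h2.trans (le_max_left _ _)
  -- strict monotonicity on [0,∞)
  have hmonoV : ∀ lam ∈ Icc (0:ℝ) lammax, StrictMonoOn (fun t => V t lam) (Ici 0) := by
    intro lam hlam
    apply strictMonoOn_of_deriv_pos (convex_Ici 0)
      (hV.smooth lam hlam).continuous.continuousOn
    intro t ht
    rw [interior_Ici] at ht
    exact hV.dV_pos lam hlam t ht
  -- constants
  set a : ℝ := min r δ' with hadef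
  have ha0 : 0 < a := lt_min hr hδ'
  have har : a ≤ r := min_le_left _ _
  set c : ℝ := Real.sqrt (κ0/4) with hcdef
  have hc0 : 0 < c := Real.sqrt_pos.mpr (by linarith)
  have hc2 : c * c = κ0/4 := Real.mul_self_sqrt (by linarith)
  set c0 : ℝ := c * a^2 / 2 with hc0def
  have hc00 : 0 < c0 := by positivity
  set C : ℝ := 1/(c*c0) + (1 + Real.log (r*L))/(c*c0) + 1/(c^2*r^2) with hCdef
  have hC : 0 < C := by
    have h1 : 0 < 1/(c*c0) := by positivity
    have h2 : 0 < (1 + Real.log (r*L))/(c*c0) := by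
      apply div_pos _ (by positivity)
      linarith
    have h3 : 0 < 1/(c^2*r^2) := by positivity
    rw [hCdef]
    linarith
  set lam0 : ℝ := min (min lammax (κ0/4 * a^2/4)) (Real.exp (-1)) with hlam0def
  have hlam00 : 0 < lam0 := lt_min (lt_min hlm (by positivity)) (Real.exp_pos _)
  have hlam0max : lam0 ≤ lammax := le_trans (min_le_left _ _) (min_le_left _ _)
  refine ⟨C, hC, lam0, hlam00, hlam0max, ?_⟩
  intro lam hlam hlamle x hδx
  have hlamIcc : lam ∈ Icc (0:ℝ) lammax := ⟨hlam.le, hlamle.trans hlam0max⟩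
  have hsm := hV.smooth lam hlamIcc
  have hcf : Continuous (fun t => V t lam) := hsm.continuous
  have hmono := hmonoV lam hlamIcc
  obtain ⟨hxmneg, hP0, hVxm, hfP⟩ := hx lam hlam (hlamle.trans hlam0max)
  set P := xp lam with hPdef
  have hlama : lam ≤ κ0/4 * a^2/4 := hlamle.trans (le_trans (min_le_left _ _) (min_le_right _ _))
  have hPr : P ≤ r := by
    by_contra h
    push_neg at h
    have h1 : V r lam < V P lam := hmono (mem_Ici.mpr hr.le) (mem_Ici.mpr hP0.le) h
    have h2 : κ0/4 * r^2 ≤ V r lam := hquad lam hlamIcc r ⟨hr.le, le_refl r⟩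
    have ha2 : a^2 ≤ r^2 := pow_le_pow_left₀ ha0.le har 2
    have h3 : κ0/4 * a^2 ≤ κ0/4 * r^2 := mul_le_mul_of_nonneg_left ha2 (by linarith)
    have h4 : 0 < κ0/4 * a^2 := by positivity
    linarith [hfP]
  have hPsq : κ0/4 * P^2 ≤ lam := by
    rw [← hfP]
    exact hquad lam hlamIcc P ⟨hP0.le, hPr⟩
  have hPle : P ≤ Real.sqrt lam / c := by
    have h1 : P^2 ≤ lam / (κ0/4) := by
      rw [le_div_iff₀ (by linarith)]
      linarith
    calc P = Real.sqrt (P^2) := (Real.sqrt_sq hP0.le).symm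
      _ ≤ Real.sqrt (lam/(κ0/4)) := Real.sqrt_le_sqrt h1
      _ = Real.sqrt lam / c := Real.sqrt_div hlam.le _
  have hPa : P < a := by
    by_contra h
    push_neg at h
    have h1 : a^2 ≤ P^2 := pow_le_pow_left₀ ha0.le h 2
    have h2 : κ0/4 * a^2 ≤ κ0/4 * P^2 := mul_le_mul_of_nonneg_left h1 (by linarith)
    have h3 : 0 < κ0/4 * a^2 := by positivity
    linarith [hPsq, hlama]
  have hPδ' : P < δ' := hPa.trans_le (min_le_right _ _)
  have hPx : P < x := hPδ'.trans_le hδx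
  have hfgeP : ∀ t, P ≤ t → lam ≤ V t lam := by
    intro t ht
    rcases eq_or_lt_of_le ht with rfl | h
    · exact hfP.ge
    · have h9 : V P lam < V t lam := hmono (mem_Ici.mpr hP0.le) (mem_Ici.mpr (hP0.le.trans ht)) h
      rw [hfP] at h9
      exact h9.le
  have hlog1 : 1 ≤ Real.log (1/lam) := by
    have h1 : lam ≤ Real.exp (-1) := hlamle.trans (min_le_right _ _)
    have h2 : Real.log lam ≤ Real.log (Real.exp (-1)) := Real.log_le_log hlam h1
    rw [Real.log_exp] at h2
    rw [one_div, Real.log_inv]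
    linarith
  -- integrability
  have hs1 : Continuous (fun t => Real.sqrt (V t lam)) := hcf.sqrt
  have hs2 : Continuous (fun t => Real.sqrt (V t lam - lam)) := (hcf.sub continuous_const).sqrt
  have hsD : Continuous (fun t => Real.sqrt (V t lam) - Real.sqrt (V t lam - lam)) := hs1.sub hs2
  set I := ∫ t in (0:ℝ)..x, Real.sqrt (V t lam) with hIdef
  set A := ∫ t in (0:ℝ)..P, Real.sqrt (V t lam) with hAdef
  set B := ∫ t in P..x, (Real.sqrt (V t lam) - Real.sqrt (V t lam - lam)) with hBdef
  have hIsplit : I = A + ∫ t in P..x, Real.sqrt (V t lam) :=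
    (intervalIntegral.integral_add_adjacent_intervals
      (hs1.intervalIntegrable 0 P) (hs1.intervalIntegrable P x)).symm
  have hBsplit : B = (∫ t in P..x, Real.sqrt (V t lam)) -
      ∫ t in P..x, Real.sqrt (V t lam - lam) :=
    intervalIntegral.integral_sub (hs1.intervalIntegrable P x) (hs2.intervalIntegrable P x)
  have key : (∫ t in P..x, Real.sqrt (V t lam - lam)) - I = -(A + B) := by
    rw [hIsplit, hBsplit]; ring
  -- nonnegativity
  have hDnonneg : ∀ t : ℝ, 0 ≤ Real.sqrt (V t lam) - Real.sqrt (V t lam - lam) := by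
    intro t
    have := Real.sqrt_le_sqrt (show V t lam - lam ≤ V t lam by linarith)
    linarith
  have hA0 : 0 ≤ A := intervalIntegral.integral_nonneg hP0.le (fun t _ => Real.sqrt_nonneg _)
  have hB0 : 0 ≤ B := intervalIntegral.integral_nonneg hPx.le (fun t _ => hDnonneg t)
  have hI0 : 0 ≤ I := intervalIntegral.integral_nonneg (by linarith) (fun t _ => Real.sqrt_nonneg _)
  -- bound on A
  have hA2 : A ≤ lam / c := by
    have h1 : A ≤ ∫ t in (0:ℝ)..P, Real.sqrt lam := by
      apply intervalIntegral.integral_mono_on hP0.le (hs1.intervalIntegrable 0 P)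
        intervalIntegrable_const
      intro t ht
      apply Real.sqrt_le_sqrt
      rcases eq_or_lt_of_le ht.2 with rfl | h
      · exact hfP.le
      · have h9 : V t lam < V P lam := hmono (mem_Ici.mpr ht.1) (mem_Ici.mpr hP0.le) h
        rw [hfP] at h9
        exact h9.le
    rw [intervalIntegral.integral_const, smul_eq_mul, sub_zero] at h1
    have h2 : P * Real.sqrt lam ≤ (Real.sqrt lam / c) * Real.sqrt lam :=
      mul_le_mul_of_nonneg_right hPle (Real.sqrt_nonneg _)
    have h3 : (Real.sqrt lam / c) * Real.sqrt lam = lam / c := by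
      rw [div_mul_eq_mul_div, Real.mul_self_sqrt hlam.le]
    linarith
  -- pointwise sqrt lower bounds
  have hsqrt_ge : ∀ t ∈ Icc (0:ℝ) r, c * t ≤ Real.sqrt (V t lam) := by
    intro t ht
    have h1 := hquad lam hlamIcc t ht
    calc c * t = Real.sqrt (κ0/4 * t^2) := by
          rw [Real.sqrt_mul (by linarith) (t^2), Real.sqrt_sq ht.1]
      _ ≤ Real.sqrt (V t lam) := Real.sqrt_le_sqrt h1
  have hsqrt_ge_far : ∀ t, r ≤ t → c * r ≤ Real.sqrt (V t lam) := by
    intro t ht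
    have h2 := hsqrt_ge r ⟨hr.le, le_refl r⟩
    rcases eq_or_lt_of_le ht with rfl | h
    · exact h2
    · have h1 : V r lam ≤ V t lam :=
        (hmono (mem_Ici.mpr hr.le) (mem_Ici.mpr (hr.le.trans ht)) h).le
      exact h2.trans (Real.sqrt_le_sqrt h1)
  have hDle : ∀ t, P ≤ t → Real.sqrt (V t lam) - Real.sqrt (V t lam - lam)
      ≤ lam / Real.sqrt (V t lam) := fun t ht => sqrt_sub_sqrt_le hlam (hfgeP t ht)
  -- near-region bound
  have hBnear : (∫ t in P..r, (Real.sqrt (V t lam) - Real.sqrt (V t lam - lam)))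
      ≤ lam/c * (Real.log (r*L) + Real.log (1/lam)) := by
    have hcomp : ∀ t ∈ Icc P r, Real.sqrt (V t lam) - Real.sqrt (V t lam - lam)
        ≤ (lam/c) * (1/t) := by
      intro t ht
      have htpos : 0 < t := lt_of_lt_of_le hP0 ht.1
      have h1 := hDle t ht.1
      have h2 : c * t ≤ Real.sqrt (V t lam) := hsqrt_ge t ⟨htpos.le, ht.2⟩
      have hct : 0 < c * t := by positivity
      have h3 : lam / Real.sqrt (V t lam) ≤ lam / (c*t) :=
        div_le_div_of_nonneg_left hlam.le hct h2
      have h4 : (lam/c) * (1/t) = lam / (c*t) := by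
        rw [div_mul_div_comm, mul_one]
      linarith
    have hintc : IntervalIntegrable (fun t => (lam/c)*(1/t)) volume P r := by
      apply ContinuousOn.intervalIntegrable
      apply ContinuousOn.mul continuousOn_const
      apply ContinuousOn.div continuousOn_const continuousOn_id
      intro t ht
      rw [uIcc_of_le hPr] at ht
      exact (lt_of_lt_of_le hP0 ht.1).ne'
    have h1 := intervalIntegral.integral_mono_on hPr (hsD.intervalIntegrable P r) hintc hcomp
    have h2 : (∫ t in P..r, (lam/c)*(1/t)) = (lam/c) * Real.log (r/P) := by
      rw [intervalIntegral.integral_const_mul, integral_one_div]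
      rw [uIcc_of_le hPr]
      exact fun h => absurd h.1 (not_le.mpr hP0)
    have hlogb : Real.log (r/P) ≤ Real.log (r*L) + Real.log (1/lam) := by
      have h4 : lam ≤ L * P := by
        rw [← hfP]
        exact hlin lam hlamIcc P ⟨hP0.le, hPr⟩
      have h3 : r/P ≤ r*L/lam := by
        rw [div_le_div_iff₀ hP0 hlam]
        have h5 : r * lam ≤ r * (L*P) := mul_le_mul_of_nonneg_left h4 hr.le
        linarith [h5]
      calc Real.log (r/P) ≤ Real.log (r*L/lam) := Real.log_le_log (by positivity) h3
        _ = Real.log (r*L) + Real.log (1/lam) := by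
            rw [Real.log_div (by positivity) hlam.ne', one_div, Real.log_inv]
            ring
    have h5 : (lam/c) * Real.log (r/P) ≤ (lam/c) * (Real.log (r*L) + Real.log (1/lam)) :=
      mul_le_mul_of_nonneg_left hlogb (by positivity)
    linarith
  -- overall bound on B
  have hBalt : B ≤ lam/c * (Real.log (r*L) + Real.log (1/lam)) + lam/(c^2*r^2) * I := by
    have hlast0 : 0 ≤ lam/(c^2*r^2) * I := by positivity
    rcases le_or_gt x r with hxr | hxr
    · have hsum : (∫ t in P..r, (Real.sqrt (V t lam) - Real.sqrt (V t lam - lam)))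
          = B + ∫ t in x..r, (Real.sqrt (V t lam) - Real.sqrt (V t lam - lam)) :=
        (intervalIntegral.integral_add_adjacent_intervals
          (hsD.intervalIntegrable P x) (hsD.intervalIntegrable x r)).symm
      have h2 : 0 ≤ ∫ t in x..r, (Real.sqrt (V t lam) - Real.sqrt (V t lam - lam)) :=
        intervalIntegral.integral_nonneg hxr (fun t _ => hDnonneg t)
      linarith
    · have hsum : B = (∫ t in P..r, (Real.sqrt (V t lam) - Real.sqrt (V t lam - lam)))
          + ∫ t in r..x, (Real.sqrt (V t lam) - Real.sqrt (V t lam - lam)) :=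
        (intervalIntegral.integral_add_adjacent_intervals
          (hsD.intervalIntegrable P r) (hsD.intervalIntegrable r x)).symm
      have hfar : (∫ t in r..x, (Real.sqrt (V t lam) - Real.sqrt (V t lam - lam)))
          ≤ (x - r) * (lam/(c*r)) := by
        have hcomp : ∀ t ∈ Icc r x, Real.sqrt (V t lam) - Real.sqrt (V t lam - lam)
            ≤ lam/(c*r) := by
          intro t ht
          have h1 := hDle t (hPr.trans ht.1)
          have h2 := hsqrt_ge_far t ht.1
          have h3 : lam / Real.sqrt (V t lam) ≤ lam / (c*r) :=
            div_le_div_of_nonneg_left hlam.le (by positivity) h2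
          linarith
        have h1 := intervalIntegral.integral_mono_on (μ := volume) hxr.le
          (hsD.intervalIntegrable r x) intervalIntegrable_const hcomp
        rw [intervalIntegral.integral_const, smul_eq_mul] at h1
        exact h1
      have hIfar : (x - r) * (c*r) ≤ ∫ t in r..x, Real.sqrt (V t lam) := by
        have hcomp : ∀ t ∈ Icc r x, c*r ≤ Real.sqrt (V t lam) :=
          fun t ht => hsqrt_ge_far t ht.1
        have h1 := intervalIntegral.integral_mono_on (μ := volume) hxr.le
          intervalIntegrable_const (hs1.intervalIntegrable r x) hcomp
        rw [intervalIntegral.integral_const, smul_eq_mul] at h1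
        exact h1
      have hIsplit2 : I = (∫ t in (0:ℝ)..r, Real.sqrt (V t lam))
          + ∫ t in r..x, Real.sqrt (V t lam) :=
        (intervalIntegral.integral_add_adjacent_intervals
          (hs1.intervalIntegrable 0 r) (hs1.intervalIntegrable r x)).symm
      have hIr0 : 0 ≤ ∫ t in (0:ℝ)..r, Real.sqrt (V t lam) :=
        intervalIntegral.integral_nonneg hr.le (fun t _ => Real.sqrt_nonneg _)
      have hIrx : (∫ t in r..x, Real.sqrt (V t lam)) ≤ I := by linarith
      have heq : (x - r) * (lam/(c*r)) = lam/(c^2*r^2) * ((x - r) * (c*r)) := by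
        field_simp
      have h6 : lam/(c^2*r^2) * ((x - r) * (c*r)) ≤ lam/(c^2*r^2) * I := by
        apply mul_le_mul_of_nonneg_left _ (by positivity)
        linarith
      linarith [hBnear]
  -- lower bound on I
  have hIc0 : c0 ≤ I := by
    have hintct : IntervalIntegrable (fun t => c*t) volume 0 a :=
      (continuous_const.mul continuous_id).intervalIntegrable 0 a
    have h1 : (∫ t in (0:ℝ)..a, c*t) ≤ ∫ t in (0:ℝ)..a, Real.sqrt (V t lam) := by
      apply intervalIntegral.integral_mono_on ha0.le hintct (hs1.intervalIntegrable 0 a)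
      intro t ht
      exact hsqrt_ge t ⟨ht.1, ht.2.trans har⟩
    have h2 : (∫ t in (0:ℝ)..a, c*t) = c * (a^2/2) := by
      rw [intervalIntegral.integral_const_mul, integral_id]
      ring
    have haxle : a ≤ x := le_trans (min_le_right _ _) hδx
    have h3 : I = (∫ t in (0:ℝ)..a, Real.sqrt (V t lam))
        + ∫ t in a..x, Real.sqrt (V t lam) :=
      (intervalIntegral.integral_add_adjacent_intervals
        (hs1.intervalIntegrable 0 a) (hs1.intervalIntegrable a x)).symm
    have h4 : 0 ≤ ∫ t in a..x, Real.sqrt (V t lam) :=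
      intervalIntegral.integral_nonneg haxle (fun t _ => Real.sqrt_nonneg _)
    rw [hc0def]
    linarith
  -- final assembly
  have habs : |(∫ t in P..x, Real.sqrt (V t lam - lam)) - I| = A + B := by
    rw [key, abs_neg, abs_of_nonneg (by linarith)]
  rw [habs]
  set lrl := Real.log (r*L) with hlrl
  set lg := Real.log (1/lam) with hlg
  have hIpos : 0 < I := lt_of_lt_of_le hc00 hIc0
  have t1 : A ≤ lam * lg * I / (c*c0) := by
    have e1 : lam/c = lam * 1 * c0 / (c*c0) := by
      field_simp
    have e5 : lam * 1 * c0 ≤ lam * lg * I := by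
      have hA' : lam * 1 ≤ lam * lg := mul_le_mul_of_nonneg_left hlog1 hlam.le
      exact mul_le_mul hA' hIc0 hc00.le (by positivity)
    calc A ≤ lam/c := hA2
      _ = lam * 1 * c0 / (c*c0) := e1
      _ ≤ lam * lg * I / (c*c0) := (div_le_div_iff_of_pos_right (by positivity)).mpr e5
  have t2a : lam/c * (lrl + lg) ≤ (1+lrl) * (lam * lg * I) / (c*c0) := by
    have e1 : lrl + lg ≤ (1+lrl) * lg := by
      have h7 : 0 ≤ lrl * (lg - 1) := mul_nonneg hlogrL (by linarith)
      linarith only [h7]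
    have e2 : lam/c * (lrl + lg) ≤ lam/c * ((1+lrl)*lg) :=
      mul_le_mul_of_nonneg_left e1 (by positivity)
    have e3 : lam/c * ((1+lrl)*lg) = (1+lrl) * (lam * lg * c0)/(c*c0) := by
      field_simp
    have e4 : (1+lrl) * (lam * lg * c0)/(c*c0) ≤ (1+lrl) * (lam * lg * I)/(c*c0) := by
      have h5 : lam * lg * c0 ≤ lam * lg * I := by
        apply mul_le_mul_of_nonneg_left hIc0
        positivity
      have h6 : (1+lrl) * (lam*lg*c0) ≤ (1+lrl)*(lam*lg*I) :=
        mul_le_mul_of_nonneg_left h5 (by linarith)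
      exact (div_le_div_iff_of_pos_right (by positivity)).mpr h6
    linarith
  have t2b : lam/(c^2*r^2) * I ≤ lam * lg * I / (c^2*r^2) := by
    have e1 : lam/(c^2*r^2) * I = lam * 1 * I / (c^2*r^2) := by ring
    rw [e1]
    have e5 : lam * 1 * I ≤ lam * lg * I := by
      have hA' : lam * 1 ≤ lam * lg := mul_le_mul_of_nonneg_left hlog1 hlam.le
      exact mul_le_mul_of_nonneg_right hA' hI0
    exact (div_le_div_iff_of_pos_right (by positivity)).mpr e5
  have hCe : C * lam * lg * I = lam * lg * I/(c*c0) + (1+lrl) * (lam*lg*I)/(c*c0)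
      + lam * lg * I/(c^2*r^2) := by
    rw [hCdef]; ring
  calc A + B ≤ (lam*lg*I/(c*c0)) + ((1+lrl)*(lam*lg*I)/(c*c0) + lam*lg*I/(c^2*r^2)) := by
        apply add_le_add t1
        exact le_trans hBalt (add_le_add t2a t2b)
    _ = C * lam * lg * I := by rw [hCe]; ring
end

section
/- Let B be a 2×2 real matrix with entries B₁₁, B₁₂, B₂₁, B₂₂, and let γ be a real number. Then the 4×4 matrix M whose rows are (γB₁₁, det B, γB₁₂, 0), (−γ, B₁₁, 0, B₁₂), (γB₂₁, 0, γB₂₂, det B), and (0, B₂₁, −γ, B₂₂) satisfies det M = γ²·det(B)·(B₁₁ + B₂₂)². In particular, if B is traceless (B₁₁ + B₂₂ = 0), then det M = 0, so M has nontrivial kernel. -/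
open Matrix

/-- **Determinant identity for the gauge-transformation linear system.**
For a 2×2 real matrix `B` and scalar `γ`, the 4×4 coefficient matrix `M` of the
homogeneous system for the gauge matrix satisfies
`det M = γ² det(B) (B₁₁ + B₂₂)²`; in particular, if `B` is traceless then `det M = 0`,
so `M` has nontrivial kernel. -/
theorem gauge_system_det (B : Matrix (Fin 2) (Fin 2) ℝ) (γ : ℝ)
    (M : Matrix (Fin 4) (Fin 4) ℝ)
    (hM : M = !![γ * B 0 0, B.det, γ * B 0 1, 0;
                 -γ, B 0 0, 0, B 0 1;
                 γ * B 1 0, 0, γ * B 1 1, B.det;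
                 0, B 1 0, -γ, B 1 1]) :
    M.det = γ ^ 2 * B.det * (B 0 0 + B 1 1) ^ 2 ∧
    (B 0 0 + B 1 1 = 0 → M.det = 0 ∧ ∃ v : Fin 4 → ℝ, v ≠ 0 ∧ M.mulVec v = 0) := by
  have hdet : M.det = γ ^ 2 * B.det * (B 0 0 + B 1 1) ^ 2 := by
    subst hM
    simp [Matrix.det_succ_row_zero, Fin.sum_univ_succ, Matrix.det_fin_two, Fin.succAbove]
    ring
  refine ⟨hdet, fun h => ?_⟩
  have h0 : M.det = 0 := by rw [hdet, h]; ring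
  refine ⟨h0, ?_⟩
  obtain ⟨v, hv, hMv⟩ := Matrix.exists_mulVec_eq_zero_iff.mpr h0
  exact ⟨v, hv, hMv⟩
end

section
/- There exists a constant C > 0 such that for all ε ∈ (0, 1/2], ∫₀^∞ dy/((1+y²)·√(1 + y²/ε)) ≤ C·ε^{1/2}·log(1/ε). -/
open MeasureTheory

/-- **A uniform integral estimate:** there is `C > 0` such that for all `ε ∈ (0, 1/2]`,
`∫₀^∞ dy/((1+y²)√(1+y²/ε)) ≤ C ε^{1/2} log(1/ε)`. -/
theorem integral_weight_bound :
    ∃ C > (0:ℝ), ∀ ε : ℝ, 0 < ε → ε ≤ 1/2 →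
      (∫ y in Set.Ioi (0:ℝ), 1 / ((1 + y ^ 2) * Real.sqrt (1 + y ^ 2 / ε))) ≤
        C * ε ^ ((1:ℝ)/2) * Real.log (1/ε) := by
  refine ⟨8, by norm_num, ?_⟩
  intro ε hε hε2
  set s := Real.sqrt ε with hs
  have hs0 : 0 < s := Real.sqrt_pos.2 hε
  have hs1 : s ≤ 1 := by
    rw [hs, show (1:ℝ) = Real.sqrt 1 by simp]
    exact Real.sqrt_le_sqrt (by linarith)
  set f : ℝ → ℝ := fun y => 1 / ((1 + y ^ 2) * Real.sqrt (1 + y ^ 2 / ε)) with hf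
  -- basic facts about the integrand
  have harg : ∀ y : ℝ, (1:ℝ) ≤ 1 + y ^ 2 / ε := by
    intro y
    have : 0 ≤ y ^ 2 / ε := div_nonneg (sq_nonneg y) hε.le
    linarith
  have hd : ∀ y : ℝ, (1:ℝ) ≤ Real.sqrt (1 + y ^ 2 / ε) := by
    intro y
    have := Real.sqrt_le_sqrt (harg y)
    simpa using this
  have hdenpos : ∀ y : ℝ, 0 < (1 + y ^ 2) * Real.sqrt (1 + y ^ 2 / ε) := by
    intro y
    have h1 : (0:ℝ) < 1 + y ^ 2 := by positivity
    exact mul_pos h1 (lt_of_lt_of_le one_pos (hd y))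
  have hfnn : ∀ y : ℝ, 0 ≤ f y := fun y => le_of_lt (by
    simp only [hf]
    exact div_pos one_pos (hdenpos y))
  -- lower bound on sqrt for positive y : sqrt(1+y²/ε) ≥ y/s
  have hsq : ∀ y : ℝ, 0 ≤ y → y / s ≤ Real.sqrt (1 + y ^ 2 / ε) := by
    intro y hy
    rw [show y / s = Real.sqrt (y ^ 2 / ε) by
      rw [Real.sqrt_div' _ hε.le, Real.sqrt_sq hy]]
    exact Real.sqrt_le_sqrt (by linarith)
  -- continuity and integrability
  have hcont : Continuous f := by
    apply Continuous.div continuous_const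
    · exact (continuous_const.add (continuous_pow 2)).mul
        (Real.continuous_sqrt.comp (by fun_prop))
    · exact fun y => ne_of_gt (hdenpos y)
  have hint : Integrable f := by
    refine integrable_inv_one_add_sq.mono' hcont.aestronglyMeasurable (.of_forall fun y => ?_)
    rw [Real.norm_of_nonneg (hfnn y), hf]
    simp only
    have h1 : (1 + y ^ 2) * 1 ≤ (1 + y ^ 2) * Real.sqrt (1 + y ^ 2 / ε) := by
      nlinarith [hd y, sq_nonneg y]
    calc 1 / ((1 + y ^ 2) * Real.sqrt (1 + y ^ 2 / ε))
        ≤ 1 / ((1 + y ^ 2) * 1) := one_div_le_one_div_of_le (by positivity) h1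
      _ = (1 + y ^ 2)⁻¹ := by rw [mul_one, one_div]
  -- pointwise bounds on the three pieces
  have hb1 : ∀ y ∈ Set.Ioc (0:ℝ) s, f y ≤ 1 := by
    intro y _
    rw [hf]; simp only
    rw [div_le_one (hdenpos y)]
    nlinarith [hd y, sq_nonneg y]
  have hb2 : ∀ y ∈ Set.Ioc s 1, f y ≤ s * y⁻¹ := by
    intro y hy
    have hy0 : 0 < y := hs0.trans hy.1
    have hkey : y / s ≤ (1 + y ^ 2) * Real.sqrt (1 + y ^ 2 / ε) := by
      calc y / s ≤ Real.sqrt (1 + y ^ 2 / ε) := hsq y hy0.le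
        _ = 1 * Real.sqrt (1 + y ^ 2 / ε) := (one_mul _).symm
        _ ≤ (1 + y ^ 2) * Real.sqrt (1 + y ^ 2 / ε) := by
            have := Real.sqrt_nonneg (1 + y ^ 2 / ε)
            nlinarith [sq_nonneg y]
    rw [hf]; simp only
    calc 1 / ((1 + y ^ 2) * Real.sqrt (1 + y ^ 2 / ε))
        ≤ 1 / (y / s) := one_div_le_one_div_of_le (by positivity) hkey
      _ = s * y⁻¹ := by field_simp
  have hb3 : ∀ y ∈ Set.Ioi (1:ℝ), f y ≤ s * (1 + y ^ 2)⁻¹ := by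
    intro y hy
    have hy1 : (1:ℝ) < y := hy
    have hkey : (1 + y ^ 2) / s ≤ (1 + y ^ 2) * Real.sqrt (1 + y ^ 2 / ε) := by
      rw [div_eq_mul_inv, mul_comm (1 + y^2) _, mul_comm (1 + y^2) _]
      apply mul_le_mul_of_nonneg_right _ (by positivity)
      calc s⁻¹ = 1 / s := (one_div s).symm
        _ ≤ y / s := by gcongr
        _ ≤ Real.sqrt (1 + y ^ 2 / ε) := hsq y (by linarith)
    rw [hf]; simp only
    calc 1 / ((1 + y ^ 2) * Real.sqrt (1 + y ^ 2 / ε))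
        ≤ 1 / ((1 + y ^ 2) / s) := one_div_le_one_div_of_le (by positivity) hkey
      _ = s * (1 + y ^ 2)⁻¹ := by field_simp
  -- split the integral
  have e1 : Set.Ioc (0:ℝ) s ∪ Set.Ioc s 1 = Set.Ioc (0:ℝ) 1 :=
    Set.Ioc_union_Ioc_eq_Ioc hs0.le hs1
  have e2 : Set.Ioc (0:ℝ) 1 ∪ Set.Ioi 1 = Set.Ioi (0:ℝ) :=
    Set.Ioc_union_Ioi_eq_Ioi zero_le_one
  have hsplit : ∫ y in Set.Ioi (0:ℝ), f y
      = (∫ y in Set.Ioc (0:ℝ) s, f y) + (∫ y in Set.Ioc s 1, f y)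
        + ∫ y in Set.Ioi (1:ℝ), f y := by
    rw [← e2, setIntegral_union (Set.Ioc_disjoint_Ioi le_rfl) measurableSet_Ioi
      hint.integrableOn hint.integrableOn, ← e1,
      setIntegral_union (Set.Ioc_disjoint_Ioc_of_le le_rfl) measurableSet_Ioc
      hint.integrableOn hint.integrableOn]
  -- piece 1
  have P1 : ∫ y in Set.Ioc (0:ℝ) s, f y ≤ s := by
    have h1 : ∫ y in Set.Ioc (0:ℝ) s, f y ≤ ∫ y in Set.Ioc (0:ℝ) s, (1:ℝ) :=
      setIntegral_mono_on hint.integrableOn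
        (integrableOn_const (by simp [Real.volume_Ioc]))
        measurableSet_Ioc hb1
    have h2 : ∫ y in Set.Ioc (0:ℝ) s, (1:ℝ) = s := by
      simp [Real.volume_Ioc, ENNReal.toReal_ofReal hs0.le, hs0.le]
    linarith
  -- piece 2
  have hIg2 : IntegrableOn (fun y : ℝ => s * y⁻¹) (Set.Ioc s 1) := by
    have hc : ContinuousOn (fun y : ℝ => s * y⁻¹) (Set.Icc s 1) := by
      apply ContinuousOn.mul continuousOn_const
      exact ContinuousOn.inv₀ continuousOn_id
        (fun y hy => ne_of_gt (lt_of_lt_of_le hs0 hy.1))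
    exact (hc.integrableOn_Icc).mono_set Set.Ioc_subset_Icc_self
  have P2 : ∫ y in Set.Ioc s 1, f y ≤ s * (Real.log (1/ε) / 2) := by
    have h1 : ∫ y in Set.Ioc s 1, f y ≤ ∫ y in Set.Ioc s 1, s * y⁻¹ :=
      setIntegral_mono_on hint.integrableOn hIg2 measurableSet_Ioc hb2
    have h2 : ∫ y in Set.Ioc s 1, s * y⁻¹ = s * (Real.log (1/ε) / 2) := by
      rw [← intervalIntegral.integral_of_le hs1, intervalIntegral.integral_const_mul,
        integral_inv_of_pos hs0 one_pos]
      congr 1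
      rw [Real.log_div one_ne_zero (ne_of_gt hs0), Real.log_one, hs,
        Real.log_sqrt hε.le, one_div, Real.log_inv]
      ring
    linarith
  -- piece 3
  have hg3 : Integrable (fun y : ℝ => s * (1 + y ^ 2)⁻¹) :=
    integrable_inv_one_add_sq.const_mul s
  have P3 : ∫ y in Set.Ioi (1:ℝ), f y ≤ s * Real.pi := by
    have h1 : ∫ y in Set.Ioi (1:ℝ), f y ≤ ∫ y in Set.Ioi (1:ℝ), s * (1 + y ^ 2)⁻¹ :=
      setIntegral_mono_on hint.integrableOn hg3.integrableOn measurableSet_Ioi hb3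
    have h2 : ∫ y in Set.Ioi (1:ℝ), s * (1 + y ^ 2)⁻¹ ≤ ∫ y : ℝ, s * (1 + y ^ 2)⁻¹ :=
      setIntegral_le_integral hg3 (Filter.Eventually.of_forall fun y => by positivity)
    have h3 : ∫ y : ℝ, s * (1 + y ^ 2)⁻¹ = s * Real.pi := by
      rw [integral_const_mul, integral_univ_inv_one_add_sq]
    linarith
  -- conclude
  have hL : Real.log 2 ≤ Real.log (1/ε) := by
    apply Real.log_le_log (by norm_num)
    rw [le_div_iff₀ hε]; linarith
  have hlog2 : (0.6931471803:ℝ) < Real.log 2 := Real.log_two_gt_d9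
  have hpi : Real.pi < 3.15 := Real.pi_lt_d2
  have hkey : 1 + Real.log (1/ε)/2 + Real.pi ≤ 8 * Real.log (1/ε) := by nlinarith
  have hrw : ε ^ ((1:ℝ)/2) = s := (Real.sqrt_eq_rpow ε).symm
  rw [hrw]
  calc ∫ y in Set.Ioi (0:ℝ), f y
      = (∫ y in Set.Ioc (0:ℝ) s, f y) + (∫ y in Set.Ioc s 1, f y)
        + ∫ y in Set.Ioi (1:ℝ), f y := hsplit
    _ ≤ s + s * (Real.log (1/ε)/2) + s * Real.pi := by linarith
    _ = s * (1 + Real.log (1/ε)/2 + Real.pi) := by ring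
    _ ≤ s * (8 * Real.log (1/ε)) := mul_le_mul_of_nonneg_left hkey hs0.le
    _ = 8 * s * Real.log (1/ε) := by ring
end
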